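/- Let n ≥ 1 be an integer and let β be the symmetric bilinear form on ℝ⁴ with ordered basis (s, e₂, e₃, F) determined by β(s,s) = −n, β(e₂,e₂) = −2, β(e₃,e₃) = −1, β(e₂,e₃) = 1, β(F,F) = 0, β(s,F) = 1, and β(u,v) = 0 for every other pair of distinct basis vectors. Set e₁ = F − e₂ − e₃. Then {x ∈ ℝ⁴ : β(x, v) ≥ 0 for every v ∈ {s, e₁, e₂, e₃}} = cone({F, nF + s − e₂ − 2e₃, nF + s − e₂ − e₃, nF + s}). -/
import Mathlib


/-- The convex cone generated by a set `s`: all finite nonnegative real linear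
combinations of elements of `s`. -/
def coneHull {E : Type*} [AddCommMonoid E] [Module ℝ E] (s : Set E) : Set E :=
  {x | ∃ (n : ℕ) (c : Fin n → ℝ) (g : Fin n → E),
    (∀ i, 0 ≤ c i) ∧ (∀ i, g i ∈ s) ∧ x = ∑ i, c i • g i}

/-- The intersection form on `ℝ⁴` in the ordered basis `(s, e₂, e₃, F)` determined by
`β(s,s)=−n`, `β(e₂,e₂)=−2`, `β(e₃,e₃)=−1`, `β(e₂,e₃)=1`, `β(F,F)=0`, `β(s,F)=1`, and
`β = 0` on every other pair of distinct basis vectors. -/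
def interForm14 (n : ℕ) (x y : Fin 4 → ℝ) : ℝ :=
  -(n : ℝ) * (x 0 * y 0) - 2 * (x 1 * y 1) - x 2 * y 2 + (x 1 * y 2 + x 2 * y 1) +
    x 0 * y 3 + x 3 * y 0

lemma interForm14_isLinear (n : ℕ) (v : Fin 4 → ℝ) :
    IsLinearMap ℝ (fun x => interForm14 n x v) := by
  constructor
  · intro a b; simp only [interForm14, Pi.add_apply]; ring
  · intro c a; simp only [interForm14, Pi.smul_apply, smul_eq_mul]; ring

/-- With `e₁ = F − e₂ − e₃`, the dual cone of `{s, e₁, e₂, e₃}` with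
respect to the intersection form is generated by `F`, `nF + s − e₂ − 2e₃`,
`nF + s − e₂ − e₃`, `nF + s`. -/
theorem statement14 (n : ℕ) (hn : 1 ≤ n) :
    {x : Fin 4 → ℝ | ∀ v ∈ ({![1, 0, 0, 0], ![0, -1, -1, 1], ![0, 1, 0, 0],
        ![0, 0, 1, 0]} : Set (Fin 4 → ℝ)), 0 ≤ interForm14 n x v} =
      coneHull {![0, 0, 0, 1], ![1, -1, -2, (n : ℝ)], ![1, -1, -1, (n : ℝ)],
        ![1, 0, 0, (n : ℝ)]} := by
  ext x
  constructor
  · intro h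
    have h1 := h ![1, 0, 0, 0] (by simp)
    have h2 := h ![0, -1, -1, 1] (by simp)
    have h3 := h ![0, 1, 0, 0] (by simp)
    have h4 := h ![0, 0, 1, 0] (by simp)
    simp only [interForm14, Matrix.cons_val_zero, Matrix.cons_val_one, Matrix.head_cons,
      Matrix.cons_val_two, Matrix.tail_cons, Matrix.cons_val_three] at h1 h2 h3 h4
    refine ⟨4, ![x 3 - n * x 0, x 1 - x 2, x 2 - 2 * x 1, x 0 + x 1],
      ![![0, 0, 0, 1], ![1, -1, -2, (n : ℝ)], ![1, -1, -1, (n : ℝ)], ![1, 0, 0, (n : ℝ)]],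
      ?_, ?_, ?_⟩
    · intro i; fin_cases i <;> simp <;> linarith
    · intro i; fin_cases i <;> simp
    · funext j
      rw [Fin.sum_univ_four]
      fin_cases j <;>
        simp [Matrix.cons_val_zero, Matrix.cons_val_one, Matrix.head_cons] <;> ring
  · rintro ⟨m, c, g, hc, hg, rfl⟩
    intro v hv
    have key : interForm14 n (∑ i, c i • g i) v = ∑ i, c i * interForm14 n (g i) v := by
      rw [show interForm14 n (∑ i, c i • g i) v
          = (IsLinearMap.mk' _ (interForm14_isLinear n v)) (∑ i, c i • g i) from rfl,
        map_sum]
      simp [smul_eq_mul]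
    rw [key]
    apply Finset.sum_nonneg
    intro i _
    apply mul_nonneg (hc i)
    have := hg i
    simp only [Set.mem_insert_iff, Set.mem_singleton_iff] at this hv
    have hn' : (1:ℝ) ≤ n := by exact_mod_cast hn
    rcases this with h|h|h|h <;> rcases hv with h'|h'|h'|h' <;>
      simp [h, h', interForm14] <;> linarith
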